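/- Let c be a real number with 1 < c < 2 and let θ > 1 be an irrational real number. Then for every ε > 0 there exist positive integers a and b such that 0 < |θ^c·b^c − a^c| < ε. (Indeed, if |θ − a/b| < 1/b², then by the mean value theorem |θ^c b^c − a^c| = c·z^{c−1}·|θ b − a| for some z between θb and a, giving a bound O(b^{c−2}).) -/

import Mathlib

open Real

private lemma aux_rpow_sub_14 (c : ℝ) (hc : 1 ≤ c) {u v : ℝ} (hv : 0 < v) (hvu : v ≤ u) :
    u ^ c - v ^ c ≤ c * u ^ (c - 1) * (u - v) := by
  have hu : 0 < u := hv.trans_le hvu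
  have hs : (-1:ℝ) ≤ v / u - 1 := by
    have : 0 < v / u := div_pos hv hu
    linarith
  have hb := one_add_mul_self_le_rpow_one_add hs hc
  have h1 : (1 : ℝ) + (v / u - 1) = v / u := by ring
  rw [h1] at hb
  have huc : (0:ℝ) < u ^ c := Real.rpow_pos_of_pos hu c
  have hb2 := mul_le_mul_of_nonneg_right hb huc.le
  have h2 : (v/u) ^ c * u ^ c = v ^ c := by
    rw [Real.div_rpow hv.le hu.le, div_mul_cancel₀ _ huc.ne']
  rw [h2] at hb2
  have hx : u ^ (c-1) = u ^ c / u := by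
    rw [Real.rpow_sub hu, Real.rpow_one]
  rw [hx]
  have key : (1 + c * (v/u - 1)) * u ^ c = u ^ c - c * (u ^ c / u) * (u - v) := by
    field_simp
    ring
  rw [key] at hb2
  linarith

set_option maxHeartbeats 1000000 in
/-- The content of the proof of Theorem 5: for `1 < c < 2` and an irrational `θ > 1`,
the quantity `|θᶜbᶜ − aᶜ|` can be made arbitrarily small (but nonzero) with positive
integers `a, b`. -/
theorem stmt_14 (c : ℝ) (hc1 : 1 < c) (hc2 : c < 2)
    (θ : ℝ) (hθ : 1 < θ) (hirr : Irrational θ) :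
    ∀ ε > 0, ∃ a b : ℕ, 0 < a ∧ 0 < b ∧
      0 < |θ ^ c * (b : ℝ) ^ c - (a : ℝ) ^ c| ∧
      |θ ^ c * (b : ℝ) ^ c - (a : ℝ) ^ c| < ε := by
  intro ε hε
  have hθ0 : (0:ℝ) < θ := by linarith
  have hc0 : (0:ℝ) < c := by linarith
  set K : ℝ := c * (2*θ) ^ (c-1) with hKdef
  have hK : 0 < K := mul_pos hc0 (Real.rpow_pos_of_pos (by linarith) _)
  set e : ℝ := (2-c)/2 with hedef
  have he : 0 < e := by rw [hedef]; linarith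
  have hεK : 0 < ε/(2*K) := div_pos hε (by linarith)
  set δ : ℝ := min 1 ((ε/(2*K)) ^ e⁻¹) with hδdef
  have hδ0 : 0 < δ := lt_min one_pos (Real.rpow_pos_of_pos hεK _)
  have hδ1 : δ ≤ 1 := min_le_left _ _
  have hδe : K * δ ^ e ≤ ε/2 := by
    have h1 : δ ^ e ≤ ((ε/(2*K)) ^ e⁻¹) ^ e :=
      Real.rpow_le_rpow hδ0.le (min_le_right _ _) he.le
    rw [← Real.rpow_mul hεK.le, inv_mul_cancel₀ he.ne', Real.rpow_one] at h1
    have := mul_le_mul_of_nonneg_left h1 hK.le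
    calc K * δ ^ e ≤ K * (ε/(2*K)) := this
      _ = ε/2 := by field_simp
  clear_value K e δ
  obtain ⟨q0, hq0a, hq0b⟩ := exists_rat_btwn (show θ < θ + δ by linarith)
  have hq0 : |θ - (q0:ℝ)| < δ := by
    rw [abs_sub_lt_iff]; constructor <;> linarith
  obtain ⟨q, hq1, hq2⟩ := Real.exists_rat_abs_sub_lt_and_lt_of_irrational hirr q0
  have hqδ : |θ - (q:ℝ)| < δ := hq2.trans hq0
  have hbpos : 0 < q.den := q.pos
  set b' : ℝ := (q.den : ℝ) with hb'
  have hb'0 : (0:ℝ) < b' := by rw [hb']; exact_mod_cast hbpos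
  have hb'1 : (1:ℝ) ≤ b' := by rw [hb']; exact_mod_cast hbpos
  have hqpos : (0:ℝ) < (q:ℝ) := by
    have h := abs_lt.mp hqδ; linarith [h.1, h.2]
  have hnum : 0 < q.num := by
    rw [Rat.num_pos]; exact_mod_cast hqpos
  set a' : ℝ := ((q.num : ℤ) : ℝ) with ha'
  have ha'0 : 0 < a' := by rw [ha']; exact_mod_cast hnum
  have hqval : (q:ℝ) = a' / b' := by rw [ha', hb', Rat.cast_def]
  have hqb : (q:ℝ) * b' = a' := by rw [hqval]; field_simp
  have habs : ∀ r : ℝ, |θ - (q:ℝ)| < r → |θ * b' - a'| < r * b' := by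
    intro r hr
    have h := mul_lt_mul_of_pos_right hr hb'0
    calc |θ * b' - a'| = |(θ - (q:ℝ)) * b'| := by rw [sub_mul, hqb]
      _ = |θ - (q:ℝ)| * b' := by rw [abs_mul, abs_of_pos hb'0]
      _ < r * b' := h
  have h1 : |θ * b' - a'| < 1 / b' := by
    have h := habs _ hq1
    have heq : 1 / b' ^ 2 * b' = 1 / b' := by
      field_simp
    rwa [heq] at h
  have h2 : |θ * b' - a'| < δ * b' := habs _ hqδ
  have hne : θ * b' ≠ a' := by
    intro h
    apply hirr.ne_rat q
    rw [hqval, eq_div_iff hb'0.ne']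
    exact h
  have hu1 : 1 < θ * b' := by nlinarith [hb'1, hθ, hθ0]
  have hmax : max (θ*b') a' ≤ 2*θ*b' := by
    apply max_le
    · linarith
    · have h3 : a' - θ*b' ≤ |θ*b' - a'| := by
        rw [abs_sub_comm]; exact le_abs_self _
      have h4 : (1:ℝ)/b' ≤ 1 := by
        rw [div_le_one hb'0]; exact hb'1
      linarith
  have hmaxpos : 0 < max (θ*b') a' := lt_of_lt_of_le ha'0 (le_max_right _ _)
  refine ⟨q.num.toNat, q.den, by omega, hbpos, ?_⟩
  have hcast : ((q.num.toNat : ℕ) : ℝ) = a' := by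
    rw [ha']; exact_mod_cast congrArg (Int.cast : ℤ → ℝ) (Int.toNat_of_nonneg hnum.le)
  rw [hcast, ← hb']
  have hmul : θ ^ c * b' ^ c = (θ * b') ^ c := (Real.mul_rpow hθ0.le hb'0.le).symm
  constructor
  · rw [hmul, abs_pos, sub_ne_zero]
    rcases hne.lt_or_gt with h | h
    · exact (Real.rpow_lt_rpow (mul_nonneg hθ0.le hb'0.le) h hc0).ne
    · exact (Real.rpow_lt_rpow ha'0.le h hc0).ne'
  · have hKey : |θ ^ c * b' ^ c - a' ^ c| ≤ c * (max (θ*b') a') ^ (c-1) * |θ*b' - a'| := by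
      rw [hmul]
      rcases le_total a' (θ*b') with h | h
      · rw [max_eq_left h,
          abs_of_nonneg (sub_nonneg.mpr (Real.rpow_le_rpow ha'0.le h hc0.le)),
          abs_of_nonneg (sub_nonneg.mpr h)]
        exact aux_rpow_sub_14 c hc1.le ha'0 h
      · rw [max_eq_right h, abs_sub_comm ((θ*b')^c) (a'^c),
          abs_of_nonneg (sub_nonneg.mpr (Real.rpow_le_rpow (mul_nonneg hθ0.le hb'0.le) h hc0.le)),
          abs_sub_comm (θ*b') a', abs_of_nonneg (sub_nonneg.mpr h)]
        exact aux_rpow_sub_14 c hc1.le (mul_pos hθ0 hb'0) h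
    have hstep : c * (max (θ*b') a') ^ (c-1) * |θ*b' - a'| ≤ K * b' ^ (c-1) * |θ*b' - a'| := by
      apply mul_le_mul_of_nonneg_right _ (abs_nonneg _)
      have hmr : (max (θ*b') a') ^ (c-1) ≤ (2*θ*b') ^ (c-1) :=
        Real.rpow_le_rpow hmaxpos.le hmax (by linarith)
      have h2θ : (2*θ*b') ^ (c-1) = (2*θ) ^ (c-1) * b' ^ (c-1) :=
        Real.mul_rpow (by linarith) hb'0.le
      calc c * (max (θ*b') a') ^ (c-1) ≤ c * ((2*θ) ^ (c-1) * b' ^ (c-1)) := by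
            rw [← h2θ]; exact mul_le_mul_of_nonneg_left hmr hc0.le
        _ = K * b' ^ (c-1) := by rw [hKdef]; ring
    have hKb : 0 < K * b' ^ (c-1) := mul_pos hK (Real.rpow_pos_of_pos hb'0 _)
    have hb2 : b' ^ (2:ℕ) = b' ^ ((2:ℝ)) := (Real.rpow_natCast b' 2).symm
    have hfin : K * b' ^ (c-1) * |θ*b' - a'| < K * δ ^ e := by
      rcases le_or_gt 1 (δ * b' ^ 2) with hcase | hcase
      · -- b' large: use h1
        have hlt := mul_lt_mul_of_pos_left h1 hKb
        have hbb : b' ^ (c-2) ≤ δ ^ e := by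
          have hb2d : δ⁻¹ ≤ b' ^ (2:ℝ) := by
            rw [← hb2, inv_eq_one_div, div_le_iff₀ hδ0]
            nlinarith
          have hr := Real.rpow_le_rpow_of_nonpos (inv_pos.mpr hδ0) hb2d
            (show (c-2)/2 ≤ 0 by linarith)
          rw [← Real.rpow_mul hb'0.le] at hr
          have hexp : (2:ℝ) * ((c-2)/2) = c - 2 := by ring
          rw [hexp] at hr
          rw [Real.inv_rpow hδ0.le, ← Real.rpow_neg hδ0.le] at hr
          have hexp2 : -((c-2)/2) = e := by rw [hedef]; ring
          rwa [hexp2] at hr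
        have heq : K * b' ^ (c-1) * (1/b') = K * b' ^ (c-2) := by
          rw [show c - 2 = (c-1) + (-1) by ring, Real.rpow_add hb'0, Real.rpow_neg_one,
            one_div, mul_assoc]
        rw [heq] at hlt
        exact hlt.trans_le (mul_le_mul_of_nonneg_left hbb hK.le)
      · -- b' small: use h2
        have hlt := mul_lt_mul_of_pos_left h2 hKb
        have hbb : b' ^ c * δ ≤ δ ^ e := by
          have hb2d : b' ^ (2:ℝ) ≤ δ⁻¹ := by
            rw [← hb2, inv_eq_one_div, le_div_iff₀ hδ0]
            nlinarith
          have hr := Real.rpow_le_rpow (by positivity) hb2d (show (0:ℝ) ≤ c/2 by linarith)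
          rw [← Real.rpow_mul hb'0.le] at hr
          have hexp : (2:ℝ) * (c/2) = c := by ring
          rw [hexp] at hr
          rw [Real.inv_rpow hδ0.le, ← Real.rpow_neg hδ0.le] at hr
          calc b' ^ c * δ ≤ δ ^ (-(c/2)) * δ := mul_le_mul_of_nonneg_right hr hδ0.le
            _ = δ ^ (-(c/2) + 1) := by
                rw [Real.rpow_add hδ0, Real.rpow_one]
            _ = δ ^ e := by rw [show -(c/2) + 1 = e by rw [hedef]; ring]
        have heq : K * b' ^ (c-1) * (δ * b') = K * (b' ^ c * δ) := by
          rw [show c = (c-1) + 1 by ring, Real.rpow_add hb'0, Real.rpow_one]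
          ring_nf
        rw [heq] at hlt
        exact hlt.trans_le (mul_le_mul_of_nonneg_left hbb hK.le)
    calc |θ ^ c * b' ^ c - a' ^ c| ≤ c * (max (θ*b') a') ^ (c-1) * |θ*b' - a'| := hKey
      _ ≤ K * b' ^ (c-1) * |θ*b' - a'| := hstep
      _ < K * δ ^ e := hfin
      _ ≤ ε/2 := hδe
      _ < ε := by linarith
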